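/- For d = 8 and every ψ ∈ ℝ, set a = e^{iψ} and define M : (ZMod 8)² → ℂ by M_{p₁,p₂} = a^{ε(p₁ mod 4, p₂ mod 4)}, where the integer exponent table ε (rows indexed by p₁ mod 4 = 0,1,2,3, columns by p₂ mod 4 = 0,1,2,3) is: row 0: 0, 1, 0, −1; row 1: 1, −1, 1, 1; row 2: 0, −1, 0, 1; row 3: −1, −1, −1, 1. Then for every ψ ∈ ℝ and every p ∈ (ZMod 8)², ∑_{r ∈ (ZMod 8)²} ω^{−(p₂r₁ − p₁r₂)} · (M (p − r)) · (M r) = 64 · δ_{p,0}, where ω = exp(π i / 4). Consequently the 64 × 64 matrix H(ψ) with entries H(ψ) p q = (1/8) · ω^{−(p₂q₁ − p₁q₂)} · M (p − q) is, for every ψ, a Hermitian complex Hadamard matrix: Hermitian, satisfying H(ψ) * H(ψ) = 1, with all entries of absolute value 1/8 and trace 8. -/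

import Mathlib

open Matrix

/-- the integer exponent table, exactly as in the statement. -/
def epsz (p : ZMod 8 × ZMod 8) : ℤ :=
  (!![0, 1, 0, -1; 1, -1, 1, 1; 0, -1, 0, 1; -1, -1, -1, 1] :
      Matrix (Fin 4) (Fin 4) ℤ)
    ⟨p.1.val % 4, Nat.mod_lt _ (by norm_num)⟩
    ⟨p.2.val % 4, Nat.mod_lt _ (by norm_num)⟩

/-- fast `ℕ`-valued version of `epsz + 1`. -/
def epsn (p : ZMod 8 × ZMod 8) : ℕ :=
  2157027865 / 4 ^ ((p.1.val % 4) * 4 + p.2.val % 4) % 4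

lemma epsn_eq : ∀ p : ZMod 8 × ZMod 8, (epsn p : ℤ) = epsz p + 1 := by decide

lemma epsn_le : ∀ p : ZMod 8 × ZMod 8, epsn p ≤ 2 := by decide

lemma epsz_neg : ∀ p : ZMod 8 × ZMod 8, epsz (-p) = - epsz p := by decide

lemma epsz_zero : epsz 0 = 0 := by decide

/-- index of the term of the big sum in the "digit" encoding. -/
def idx (p r : ZMod 8 × ZMod 8) : ℕ :=
  (p.1 * r.2 - p.2 * r.1).val * 5 + (epsn (p - r) + epsn r)

/-- total of all digits, base 128. -/
def Np (p : ZMod 8 × ZMod 8) : ℕ := ∑ r : ZMod 8 × ZMod 8, 128 ^ idx p r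

set_option maxHeartbeats 2000000 in
set_option maxRecDepth 20000 in
lemma keyN : ∀ p : ZMod 8 × ZMod 8, p ≠ 0 →
    Np p % 128 ^ 20 = Np p / 128 ^ 20 := by decide

/-- generic fiberwise summation. -/
lemma fiber_sum {α β : Type*} [Fintype α] [DecidableEq α] [AddCommMonoid β]
    (f : α → ℕ) (n : ℕ) (hf : ∀ x, f x < n) (g : ℕ → β) :
    ∑ x, g (f x) = ∑ t ∈ Finset.range n,
      (Finset.univ.filter fun x => f x = t).card • g t := by
  rw [← Finset.sum_fiberwise_of_maps_to (fun x _ => Finset.mem_range.2 (hf x))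
      (fun x => g (f x))]
  refine Finset.sum_congr rfl fun t _ => ?_
  rw [Finset.sum_congr rfl (g := fun _ => g t) (fun x hx => by
      rw [(Finset.mem_filter.1 hx).2]), Finset.sum_const]

lemma digit_sum_lt (n : ℕ) (a : ℕ → ℕ) (ha : ∀ t < n, a t < 128) :
    ∑ t ∈ Finset.range n, a t * 128 ^ t < 128 ^ n := by
  induction n with
  | zero => simp
  | succ n ih =>
    rw [Finset.sum_range_succ]
    have h1 : ∑ t ∈ Finset.range n, a t * 128 ^ t < 128 ^ n :=
      ih fun t ht => ha t (ht.trans n.lt_succ_self)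
    have h2 : a n ≤ 127 := Nat.lt_succ_iff.mp (ha n n.lt_succ_self)
    have h3 : a n * 128 ^ n ≤ 127 * 128 ^ n := Nat.mul_le_mul_right _ h2
    calc ∑ t ∈ Finset.range n, a t * 128 ^ t + a n * 128 ^ n
        < 128 ^ n + 127 * 128 ^ n := by omega
      _ = 128 ^ (n + 1) := by ring
  
lemma digit_inj (n : ℕ) : ∀ (a b : ℕ → ℕ), (∀ t < n, a t < 128) → (∀ t < n, b t < 128) →
    (∑ t ∈ Finset.range n, a t * 128 ^ t) = (∑ t ∈ Finset.range n, b t * 128 ^ t) →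
    ∀ t < n, a t = b t := by
  induction n with
  | zero => intro a b _ _ _ t ht; omega
  | succ n ih =>
    intro a b ha hb hsum t ht
    have expand : ∀ c : ℕ → ℕ, ∑ t ∈ Finset.range (n+1), c t * 128 ^ t
        = c 0 + 128 * ∑ t ∈ Finset.range n, c (t+1) * 128 ^ t := by
      intro c
      rw [Finset.sum_range_succ' (fun t => c t * 128 ^ t) n, Finset.mul_sum, add_comm]
      exact congrArg₂ (· + ·) (by norm_num) (Finset.sum_congr rfl fun i _ => by ring)
    rw [expand a, expand b] at hsum
    have h0 : a 0 = b 0 := by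
      have := congrArg (· % 128) hsum
      simpa [Nat.add_mul_mod_self_left, Nat.mod_eq_of_lt (ha 0 n.succ_pos),
        Nat.mod_eq_of_lt (hb 0 n.succ_pos), Nat.mul_add_mod] using this
    have hrest : (∑ t ∈ Finset.range n, a (t+1) * 128 ^ t)
        = ∑ t ∈ Finset.range n, b (t+1) * 128 ^ t := by omega
    rcases Nat.eq_zero_or_pos t with rfl | htpos
    · exact h0
    · obtain ⟨s, rfl⟩ := Nat.exists_eq_add_of_le htpos
      have := ih (fun t => a (t+1)) (fun t => b (t+1))
        (fun t ht => ha (t+1) (by omega)) (fun t ht => hb (t+1) (by omega)) hrest s (by omega)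
      simpa [Nat.add_comm] using this

/-- the count of terms with a given digit index. -/
def cnt (p : ZMod 8 × ZMod 8) (t : ℕ) : ℕ :=
  (Finset.univ.filter fun r => idx p r = t).card

lemma idx_lt (p r : ZMod 8 × ZMod 8) : idx p r < 40 := by
  have h1 : (p.1 * r.2 - p.2 * r.1).val < 8 := ZMod.val_lt _
  have h2 := epsn_le (p - r)
  have h3 := epsn_le r
  unfold idx; omega

lemma cnt_lt (p : ZMod 8 × ZMod 8) (t : ℕ) : cnt p t < 128 := by
  have : cnt p t ≤ Fintype.card (ZMod 8 × ZMod 8) := Finset.card_filter_le _ _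
  simp [ZMod.card] at this
  omega

lemma cnt_eq (p : ZMod 8 × ZMod 8) (hp : p ≠ 0) : ∀ t < 20, cnt p t = cnt p (t + 20) := by
  have hNp : Np p = ∑ t ∈ Finset.range 40, cnt p t * 128 ^ t := by
    unfold Np cnt
    rw [fiber_sum (idx p) 40 (idx_lt p) (fun t => 128 ^ t)]
    exact Finset.sum_congr rfl fun t _ => by rw [nsmul_eq_mul]; rfl
  have hsplit : Np p = (∑ t ∈ Finset.range 20, cnt p t * 128 ^ t)
      + 128 ^ 20 * ∑ t ∈ Finset.range 20, cnt p (t + 20) * 128 ^ t := by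
    rw [hNp, ← Finset.sum_range_add_sum_Ico _ (by norm_num : 20 ≤ 40),
      Finset.sum_Ico_eq_sum_range]
    rw [Finset.mul_sum]
    exact congrArg₂ (· + ·) rfl (Finset.sum_congr (by norm_num) fun i _ => by
      rw [Nat.add_comm 20 i, pow_add]; ring)
  have hA : (∑ t ∈ Finset.range 20, cnt p t * 128 ^ t) < 128 ^ 20 :=
    digit_sum_lt 20 _ (fun t _ => cnt_lt p t)
  have hmod : Np p % 128 ^ 20 = ∑ t ∈ Finset.range 20, cnt p t * 128 ^ t := by
    rw [hsplit, Nat.add_mul_mod_self_left, Nat.mod_eq_of_lt hA]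
  have hdiv : Np p / 128 ^ 20 = ∑ t ∈ Finset.range 20, cnt p (t + 20) * 128 ^ t := by
    rw [hsplit, Nat.add_mul_div_left _ _ (by positivity), Nat.div_eq_of_lt hA, Nat.zero_add]
  have := keyN p hp
  rw [hmod, hdiv] at this
  exact digit_inj 20 _ _ (fun t _ => cnt_lt p t) (fun t _ => cnt_lt p _) this

noncomputable def om : ℂ := Complex.exp (Real.pi * Complex.I / 4)

lemma om_pow_four : om ^ 4 = -1 := by
  rw [om, ← Complex.exp_nat_mul]
  rw [show (4 : ℕ) * (↑Real.pi * Complex.I / 4) = Real.pi * Complex.I by push_cast; ring]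
  exact Complex.exp_pi_mul_I

lemma om_pow_eight : om ^ 8 = 1 := by
  have : om ^ 8 = (om ^ 4) ^ 2 := by ring
  rw [this, om_pow_four]; norm_num

lemma om_pow_mod (k : ℕ) : om ^ k = om ^ (k % 8) := by
  conv_lhs => rw [← Nat.div_add_mod k 8]
  rw [pow_add, pow_mul, om_pow_eight, one_pow, one_mul]

lemma om_add (m n : ZMod 8) : om ^ (m + n).val = om ^ m.val * om ^ n.val := by
  rw [ZMod.val_add, ← om_pow_mod, pow_add]

lemma om_shift (t : ℕ) : om ^ (t + 4) = -om ^ t := by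
  rw [pow_add, om_pow_four, mul_neg_one]

lemma om_abs : ‖om‖ = 1 := by
  rw [om, Complex.norm_exp]
  have : (↑Real.pi * Complex.I / 4).re = 0 := by
    simp [Complex.div_re, Complex.mul_re]
  rw [this, Real.exp_zero]

lemma om_conj (m : ZMod 8) :
    (starRingEnd ℂ) (om ^ m.val) = om ^ (-m).val := by
  have h1 : om ^ m.val * om ^ (-m).val = 1 := by
    rw [← om_add]
    simp [ZMod.val_zero]
  have h2 : (om ^ m.val)⁻¹ = om ^ (-m).val := inv_eq_of_mul_eq_one_right h1
  rw [← h2, ← Complex.inv_eq_conj]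
  rw [norm_pow, om_abs, one_pow]

noncomputable def Gf (z : ℂ) (t : ℕ) : ℂ := om ^ (t / 5) * z ^ (((t % 5 : ℕ) : ℤ) - 2)

lemma Gf_shift (z : ℂ) (t : ℕ) : Gf z (t + 20) = -Gf z t := by
  have hd : (t + 20) / 5 = t / 5 + 4 := by omega
  have hm : (t + 20) % 5 = t % 5 := by omega
  rw [Gf, Gf, hd, hm, om_shift]
  ring

lemma mainSum (M : ℝ → ZMod 8 × ZMod 8 → ℂ)
    (hM : ∀ (ψ : ℝ) (p : ZMod 8 × ZMod 8),
      M ψ p = Complex.exp (Complex.I * ψ * (epsz p : ℤ)))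
    (ψ : ℝ) (p : ZMod 8 × ZMod 8) :
    ∑ r : ZMod 8 × ZMod 8,
        om ^ ((p.1 * r.2 - p.2 * r.1).val) * M ψ (p - r) * M ψ r
      = if p = 0 then 64 else 0 := by
  set z := Complex.exp (Complex.I * ψ) with hzdef
  have hz : z ≠ 0 := Complex.exp_ne_zero _
  have hMz : ∀ x, M ψ x = z ^ (epsz x) := by
    intro x
    rw [hM, show Complex.I * ↑ψ * (epsz x : ℤ) = ((epsz x : ℤ) : ℂ) * (Complex.I * ↑ψ) by ring]
    exact Complex.exp_int_mul _ _
  by_cases hp : p = 0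
  · subst hp
    rw [if_pos rfl]
    have hone : ∀ r : ZMod 8 × ZMod 8,
        om ^ (((0 : ZMod 8 × ZMod 8).1 * r.2 - (0 : ZMod 8 × ZMod 8).2 * r.1).val)
          * M ψ (0 - r) * M ψ r = 1 := by
      intro r
      have h0 : ((0 : ZMod 8 × ZMod 8).1 * r.2 - (0 : ZMod 8 × ZMod 8).2 * r.1) = 0 := by
        simp
      rw [h0, ZMod.val_zero, pow_zero, one_mul, zero_sub, hMz, hMz, ← zpow_add₀ hz,
        epsz_neg]
      simp
    rw [Finset.sum_congr rfl (fun r _ => hone r), Finset.sum_const]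
    rw [Finset.card_univ]
    simp [ZMod.card]
  · rw [if_neg hp]
    have hterm : ∀ r : ZMod 8 × ZMod 8,
        om ^ ((p.1 * r.2 - p.2 * r.1).val) * M ψ (p - r) * M ψ r = Gf z (idx p r) := by
      intro r
      have he1 := epsn_le (p - r)
      have he2 := epsn_le r
      have hdiv : idx p r / 5 = (p.1 * r.2 - p.2 * r.1).val := by unfold idx; omega
      have hmod : idx p r % 5 = epsn (p - r) + epsn r := by unfold idx; omega
      rw [Gf, hdiv, hmod]
      have hexp : ((epsn (p - r) + epsn r : ℕ) : ℤ) - 2 = epsz (p - r) + epsz r := by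
        push_cast
        rw [epsn_eq, epsn_eq]
        ring
      rw [hexp, zpow_add₀ hz, hMz, hMz, mul_assoc]
    rw [Finset.sum_congr rfl (fun r _ => hterm r),
      fiber_sum (idx p) 40 (idx_lt p) (Gf z)]
    have hsplit : ∑ t ∈ Finset.range 40,
          (Finset.univ.filter fun r => idx p r = t).card • Gf z t
        = (∑ t ∈ Finset.range 20, cnt p t • Gf z t)
          + ∑ t ∈ Finset.range 20, cnt p (t + 20) • Gf z (t + 20) := by
      rw [← Finset.sum_range_add_sum_Ico _ (by norm_num : 20 ≤ 40),
        Finset.sum_Ico_eq_sum_range]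
      exact congrArg₂ (· + ·) rfl (Finset.sum_congr (by norm_num) fun i _ => by
        rw [Nat.add_comm 20 i]; rfl)
    rw [hsplit, ← Finset.sum_add_distrib]
    rw [Finset.sum_congr rfl (fun t ht => ?_), Finset.sum_const_zero]
    rw [← cnt_eq p hp t (Finset.mem_range.1 ht), Gf_shift, smul_neg, add_neg_cancel]


/-- For `d = 8` and `a = e^{iψ}`, the squared-phase matrix
`M p = a^{ε(p₁ mod 4, p₂ mod 4)}` (with the integer exponent table `ε` below) satisfies
`∑_r ω^{-(p₂r₁ - p₁r₂)} M(p-r) M(r) = 64 δ_{p,0}` for every `ψ` and `p`, where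
`ω = exp(πi/4)`; consequently `H(ψ) p q = (1/8) ω^{-(p₂q₁ - p₁q₂)} M (p-q)` is for every
`ψ` a Hermitian complex Hadamard matrix of order 64 with trace 8. -/
theorem stmt_19
    (M : ℝ → ZMod 8 × ZMod 8 → ℂ)
    (hM : ∀ (ψ : ℝ) (p : ZMod 8 × ZMod 8),
      M ψ p = Complex.exp (Complex.I * ψ *
        ((!![0, 1, 0, -1; 1, -1, 1, 1; 0, -1, 0, 1; -1, -1, -1, 1] :
            Matrix (Fin 4) (Fin 4) ℤ)
          ⟨p.1.val % 4, Nat.mod_lt _ (by norm_num)⟩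
          ⟨p.2.val % 4, Nat.mod_lt _ (by norm_num)⟩ : ℤ)))
    (H : ℝ → Matrix (ZMod 8 × ZMod 8) (ZMod 8 × ZMod 8) ℂ)
    (hH : ∀ (ψ : ℝ) (p q : ZMod 8 × ZMod 8),
      H ψ p q = (1 / 8 : ℂ) *
        Complex.exp (Real.pi * Complex.I / 4) ^ ((p.1 * q.2 - p.2 * q.1).val)
          * M ψ (p - q)) :
    (∀ (ψ : ℝ) (p : ZMod 8 × ZMod 8),
      ∑ r : ZMod 8 × ZMod 8,
        Complex.exp (Real.pi * Complex.I / 4) ^ ((p.1 * r.2 - p.2 * r.1).val)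
          * M ψ (p - r) * M ψ r
        = if p = 0 then 64 else 0) ∧
    ∀ ψ : ℝ,
      (H ψ).IsHermitian ∧
      H ψ * H ψ = 1 ∧
      (∀ p q, ‖H ψ p q‖ = 1 / 8) ∧
      (H ψ).trace = 8 := by
  have hM' : ∀ (ψ : ℝ) (p : ZMod 8 × ZMod 8),
      M ψ p = Complex.exp (Complex.I * ψ * (epsz p : ℤ)) := hM
  have hH' : ∀ (ψ : ℝ) (p q : ZMod 8 × ZMod 8),
      H ψ p q = (1 / 8 : ℂ) * om ^ ((p.1 * q.2 - p.2 * q.1).val) * M ψ (p - q) := hH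
  constructor
  · exact fun ψ p => mainSum M hM' ψ p
  intro ψ
  have habsM : ∀ x : ZMod 8 × ZMod 8, ‖M ψ x‖ = 1 := by
    intro x
    rw [hM', Complex.norm_exp]
    have : (Complex.I * ↑ψ * ((epsz x : ℤ) : ℂ)).re = 0 := by
      simp [Complex.mul_re]
    rw [this, Real.exp_zero]
  have hMconj : ∀ x : ZMod 8 × ZMod 8, star (M ψ x) = M ψ (-x) := by
    intro x
    rw [hM', hM', ← starRingEnd_apply, ← Complex.exp_conj]
    congr 1
    simp only [_root_.map_mul, Complex.conj_I, Complex.conj_ofReal, map_intCast]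
    rw [epsz_neg]
    push_cast
    ring
  have homconj : ∀ m : ZMod 8, star (om ^ m.val) = om ^ (-m).val := by
    intro m
    rw [← starRingEnd_apply]
    exact om_conj m
  refine ⟨?_, ?_, ?_, ?_⟩
  · -- Hermitian
    show (H ψ)ᴴ = H ψ
    ext p q
    rw [Matrix.conjTranspose_apply, hH' ψ q p, hH' ψ p q]
    rw [star_mul', star_mul', homconj, hMconj]
    have h18 : star ((1:ℂ)/8) = 1/8 := by simp
    rw [h18]
    have e1 : -(q.1 * p.2 - q.2 * p.1) = p.1 * q.2 - p.2 * q.1 := by ring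
    have e2 : -(q - p) = p - q := neg_sub q p
    rw [e1, e2]
  · -- H * H = 1
    ext p q
    rw [Matrix.mul_apply]
    have hstep : ∀ s : ZMod 8 × ZMod 8, H ψ p (s + q) * H ψ (s + q) q
        = (1/64 : ℂ) * om ^ ((p.1 * q.2 - p.2 * q.1).val)
          * (om ^ (((p - q).1 * s.2 - (p - q).2 * s.1).val) * M ψ ((p - q) - s) * M ψ s) := by
      intro s
      rw [hH', hH']
      have hm1 : p - (s + q) = (p - q) - s := by
        rw [sub_add_eq_sub_sub, sub_right_comm]
      have hm2 : s + q - q = s := add_sub_cancel_right s q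
      rw [hm1, hm2]
      have hexp : om ^ ((p.1 * (s + q).2 - p.2 * (s + q).1).val)
            * om ^ (((s + q).1 * q.2 - (s + q).2 * q.1).val)
          = om ^ ((p.1 * q.2 - p.2 * q.1).val)
            * om ^ (((p - q).1 * s.2 - (p - q).2 * s.1).val) := by
        rw [← om_add, ← om_add]
        have : (p.1 * (s + q).2 - p.2 * (s + q).1) + ((s + q).1 * q.2 - (s + q).2 * q.1)
            = (p.1 * q.2 - p.2 * q.1) + ((p - q).1 * s.2 - (p - q).2 * s.1) := by
          simp only [Prod.fst_add, Prod.snd_add, Prod.fst_sub, Prod.snd_sub]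
          ring
        rw [this]
      have harr : ∀ (x y m₁ m₂ : ℂ),
          ((1:ℂ)/8 * x * m₁) * ((1:ℂ)/8 * y * m₂) = 1/64 * (x * y) * m₁ * m₂ := by
        intros; ring
      rw [harr, hexp]
      ring
    rw [← Equiv.sum_comp (Equiv.addRight q) (fun r => H ψ p r * H ψ r q)]
    simp only [Equiv.coe_addRight]
    rw [Finset.sum_congr rfl (fun s _ => hstep s), ← Finset.mul_sum,
      mainSum M hM' ψ (p - q)]
    by_cases hpq : p = q
    · subst hpq
      rw [if_pos (sub_self p), Matrix.one_apply_eq]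
      rw [show (p.1 * p.2 - p.2 * p.1) = 0 by ring, ZMod.val_zero, pow_zero]
      norm_num
    · rw [if_neg (fun h => hpq (sub_eq_zero.1 h)), Matrix.one_apply_ne hpq]
      ring
  · -- entries
    intro p q
    rw [hH', norm_mul, norm_mul, norm_pow, om_abs, one_pow, habsM]
    norm_num
  · -- trace
    have hdiag : ∀ p : ZMod 8 × ZMod 8, H ψ p p = 1/8 := by
      intro p
      rw [hH', show (p.1 * p.2 - p.2 * p.1) = 0 by ring, ZMod.val_zero, pow_zero,
        sub_self, hM', epsz_zero]
      simp
    rw [Matrix.trace]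
    rw [Finset.sum_congr rfl (fun p _ => (Matrix.diag_apply (H ψ) p).trans (hdiag p)),
      Finset.sum_const, Finset.card_univ]
    simp [ZMod.card]
    norm_num
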